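/- Let G be a Hausdorff topological group whose underlying Tychonoff space is Lindelöf and basically disconnected. Then either G is a P-space, or there exists a closed normal subgroup N of G such that the quotient topological group G/N is nondiscrete, has countable pseudocharacter, is basically disconnected, and contains an open Boolean subgroup whose underlying space is basically disconnected. -/

import Mathlib

open Set Topology Pointwise unitInterval

universe u v w

/-- A cozero set: the set where some continuous real-valued function is nonzero. -/
def IsCozeroSet {X : Type u} [TopologicalSpace X] (s : Set X) : Prop :=
  ∃ f : X → ℝ, Continuous f ∧ s = {x | f x ≠ 0}

/-- An F-space: any two disjoint cozero sets are completely separated. -/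
def IsFSpace (X : Type u) [TopologicalSpace X] : Prop :=
  ∀ s t : Set X, IsCozeroSet s → IsCozeroSet t → Disjoint s t →
    ∃ g : X → ℝ, Continuous g ∧ (∀ x, g x ∈ Set.Icc (0 : ℝ) 1) ∧
      (∀ x ∈ s, g x = 0) ∧ (∀ x ∈ t, g x = 1)

/-- An F'-space: any two disjoint cozero sets have disjoint closures. -/
def IsFPrimeSpace (X : Type u) [TopologicalSpace X] : Prop :=
  ∀ s t : Set X, IsCozeroSet s → IsCozeroSet t → Disjoint s t →
    Disjoint (closure s) (closure t)

/-- A basically disconnected space: the closure of every cozero set is open. -/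
def IsBasicallyDisconnected (X : Type u) [TopologicalSpace X] : Prop :=
  ∀ s : Set X, IsCozeroSet s → IsOpen (closure s)

/-- A P-space: every Gδ set is open. -/
def IsPSpace (X : Type u) [TopologicalSpace X] : Prop :=
  ∀ s : Set X, IsGδ s → IsOpen s

/-- Covering dimension at most `n`: every finite open cover has a finite open
refinement in which every point belongs to at most `n + 1` members. -/
def CovDimLE (X : Type u) [TopologicalSpace X] (n : ℕ) : Prop :=
  ∀ 𝒰 : Finset (Set X), (∀ U ∈ 𝒰, IsOpen U) → ⋃₀ (𝒰 : Set (Set X)) = Set.univ →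
    ∃ 𝒱 : Finset (Set X), (∀ V ∈ 𝒱, IsOpen V) ∧ ⋃₀ (𝒱 : Set (Set X)) = Set.univ ∧
      (∀ V ∈ 𝒱, ∃ U ∈ 𝒰, V ⊆ U) ∧
      ∀ x : X, {V : Set X | V ∈ 𝒱 ∧ x ∈ V}.ncard ≤ n + 1

/-- An ℝ-quotient map: a continuous surjection such that a real-valued function on the
target is continuous whenever its composition with the map is continuous. -/
def IsRQuotientMap {X : Type u} {Y : Type v} [TopologicalSpace X] [TopologicalSpace Y]
    (p : X → Y) : Prop :=
  Continuous p ∧ Function.Surjective p ∧ ∀ φ : Y → ℝ, Continuous (φ ∘ p) → Continuous φ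

/-- A non-P-point: a point having a Gδ set around it which is not a neighborhood of it. -/
def IsNonPPoint {X : Type u} [TopologicalSpace X] (x : X) : Prop :=
  ∃ s : Set X, IsGδ s ∧ x ∈ s ∧ s ∉ nhds x

/-- The properties of the quotient group `G ⧸ N` asserted in the theorem: it is nondiscrete,
of countable pseudocharacter, basically disconnected, and contains an open Boolean subgroup
whose underlying space is basically disconnected. -/
def QuotientIsGood {G : Type u} [Group G] [TopologicalSpace G] (N : Subgroup G)
    [N.Normal] : Prop :=
  ¬ DiscreteTopology (G ⧸ N) ∧ IsGδ ({1} : Set (G ⧸ N)) ∧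
  IsBasicallyDisconnected (G ⧸ N) ∧
  ∃ H : Subgroup (G ⧸ N), IsOpen (H : Set (G ⧸ N)) ∧ (∀ h ∈ H, h * h = 1) ∧
    IsBasicallyDisconnected ↥H


variable {X : Type u} [TopologicalSpace X]

lemma IsCozeroSet.isOpen {X : Type u} [TopologicalSpace X] {s : Set X} (h : IsCozeroSet s) :
    IsOpen s := by
  obtain ⟨f, hf, rfl⟩ := h
  exact isOpen_compl_singleton.preimage hf

lemma IsCozeroSet.inter {X : Type u} [TopologicalSpace X] {s t : Set X} (hs : IsCozeroSet s)
    (ht : IsCozeroSet t) : IsCozeroSet (s ∩ t) := by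
  obtain ⟨f, hf, rfl⟩ := hs
  obtain ⟨g, hg, rfl⟩ := ht
  refine ⟨fun x => f x * g x, hf.mul hg, ?_⟩
  ext x; simp [mul_ne_zero_iff]

lemma IsCozeroSet.preimage {X : Type u} {Y : Type v} [TopologicalSpace X] [TopologicalSpace Y]
    {s : Set Y} (hs : IsCozeroSet s) {g : X → Y} (hg : Continuous g) :
    IsCozeroSet (g ⁻¹' s) := by
  obtain ⟨f, hf, rfl⟩ := hs
  exact ⟨f ∘ g, hf.comp hg, rfl⟩

lemma isCozeroSet_of_isClopen {s : Set X} (h : IsClopen s) : IsCozeroSet s := by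
  classical
  refine ⟨fun x => if x ∈ s then (1:ℝ) else 0, ?_, ?_⟩
  · apply continuous_if (fun a ha => ?_) continuous_const.continuousOn continuous_const.continuousOn
    simp only [Set.setOf_mem_eq, h.frontier_eq] at ha; exact ha.elim
  · ext x; by_cases hx : x ∈ s <;> simp [hx]

lemma tsum_witness (h : ℕ → X → ℝ) (hc : ∀ n, Continuous (h n)) (h0 : ∀ n x, 0 ≤ h n x)
    (h1 : ∀ n x, h n x ≤ 1) :
    ∃ F : X → ℝ, Continuous F ∧ ∀ x, (F x = 0 ↔ ∀ n, h n x = 0) := by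
  have hu : Summable (fun n : ℕ => (1/2 : ℝ)^n) := summable_geometric_two
  have hb : ∀ (n : ℕ) (x : X), ‖(1/2:ℝ)^n * h n x‖ ≤ (1/2:ℝ)^n := by
    intro n x
    rw [Real.norm_eq_abs, abs_of_nonneg (mul_nonneg (by positivity) (h0 n x))]
    nlinarith [h0 n x, h1 n x, pow_pos (by norm_num : (0:ℝ) < 1/2) n]
  refine ⟨fun x => ∑' n, (1/2:ℝ)^n * h n x,
    continuous_tsum (fun n => continuous_const.mul (hc n)) hu hb, fun x => ?_⟩
  show (∑' n, (1/2:ℝ)^n * h n x) = 0 ↔ ∀ n, h n x = 0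
  have hsum : Summable fun n => (1/2:ℝ)^n * h n x := by
    apply Summable.of_nonneg_of_le (fun n => mul_nonneg (by positivity) (h0 n x))
      (fun n => ?_) hu
    nlinarith [h0 n x, h1 n x, pow_pos (by norm_num : (0:ℝ) < 1/2) n]
  constructor
  · intro hF n
    by_contra hn
    have hpos : 0 < (1/2:ℝ)^n * h n x :=
      mul_pos (by positivity) ((h0 n x).lt_of_ne (Ne.symm hn))
    have hle := Summable.le_tsum hsum n (fun m _ => mul_nonneg (by positivity) (h0 m x))
    rw [hF] at hle; linarith
  · intro hall
    simp only [hall, mul_zero, tsum_zero]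

lemma isCozeroSet_iUnion {s : ℕ → Set X} (hs : ∀ n, IsCozeroSet (s n)) :
    IsCozeroSet (⋃ n, s n) := by
  choose f hf hfs using hs
  obtain ⟨F, hF, hF0⟩ := tsum_witness (fun n x => min |f n x| 1)
    (fun n => ((hf n).abs.min continuous_const))
    (fun n x => le_min (abs_nonneg _) one_pos.le) (fun n x => min_le_right _ _)
  have key : ∀ (n : ℕ) (x : X), min |f n x| 1 = 0 ↔ f n x = 0 := by
    intro n x
    constructor
    · intro h
      rcases min_eq_iff.1 h with ⟨h1, _⟩ | ⟨h1, _⟩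
      · exact abs_eq_zero.1 h1
      · norm_num at h1
    · intro h; simp [h]
  refine ⟨F, hF, ?_⟩
  ext x
  simp only [mem_iUnion, mem_setOf_eq]
  constructor
  · rintro ⟨n, hn⟩ h0
    rw [hfs n] at hn
    exact hn ((key n x).1 ((hF0 x).1 h0 n))
  · intro hx
    by_contra hall
    push_neg at hall
    apply hx
    rw [(hF0 x).2]
    intro n
    rw [key n x]
    have := hall n
    rw [hfs n] at this
    simpa using this

-- probe names
example {s : Set X} (h : IsOpen s) (t : Set X) (hd : Disjoint s t) : Disjoint s (closure t) :=
  hd.closure_right h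

lemma IsBasicallyDisconnected.disjoint_closure (hbd : IsBasicallyDisconnected X)
    {s t : Set X} (hs : IsCozeroSet s) (ht : IsCozeroSet t) (hd : Disjoint s t) :
    Disjoint (closure s) (closure t) := by
  have h1 : Disjoint (closure s) t := (hd.symm.closure_right ht.isOpen).symm
  exact h1.closure_right (hbd s hs)

lemma exists_cozero_nhd [CompletelyRegularSpace X] {x : X} {U : Set X} (hU : IsOpen U)
    (hx : x ∈ U) : ∃ C : Set X, IsCozeroSet C ∧ x ∈ C ∧ C ⊆ U := by
  obtain ⟨f, hf, hf0, hf1⟩ :=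
    CompletelyRegularSpace.completely_regular x Uᶜ hU.isClosed_compl (by simpa using hx)
  refine ⟨{y | (f y : ℝ) - 1 ≠ 0}, ⟨fun y => (f y : ℝ) - 1, (continuous_subtype_val.comp hf).sub continuous_const, rfl⟩, ?_, ?_⟩
  · simp [hf0]
  · intro y hy
    by_contra hyU
    apply hy
    have := hf1 (by simpa using hyU)
    simp [this]

lemma isCozeroSet_empty {X : Type u} [TopologicalSpace X] : IsCozeroSet (∅ : Set X) :=
  ⟨fun _ => 0, continuous_const, by simp⟩

lemma exists_zero_fun_of_gdelta {X : Type u} [TopologicalSpace X] [CompletelyRegularSpace X]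
    {p : X} (hp : IsGδ ({p} : Set X)) :
    ∃ F : X → ℝ, Continuous F ∧ ∀ x, (F x = 0 ↔ x = p) := by
  obtain ⟨T, hTo, hTc, hTe⟩ := hp
  have hTc' : (insert univ T : Set (Set X)).Countable := hTc.insert _
  obtain ⟨W, hW⟩ := hTc'.exists_eq_range ⟨univ, mem_insert _ _⟩
  have hmem : ∀ n, W n ∈ insert univ T := fun n => hW ▸ mem_range_self n
  have hWo : ∀ n, IsOpen (W n) := by
    intro n
    rcases hmem n with h | h
    · rw [h]; exact isOpen_univ
    · exact hTo _ h
  have hpT : ∀ t ∈ T, p ∈ t := by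
    intro t ht
    have : p ∈ ⋂₀ T := by rw [← hTe]; exact rfl
    exact this t ht
  have hWp : ∀ n, p ∈ W n := by
    intro n
    rcases hmem n with h | h
    · rw [h]; trivial
    · exact hpT _ h
  have hWi : (⋂ n, W n) = {p} := by
    apply Subset.antisymm
    · intro x hx
      rw [hTe]
      intro t ht
      have : t ∈ range W := by rw [← hW]; exact mem_insert_of_mem _ ht
      obtain ⟨n, rfl⟩ := this
      exact mem_iInter.1 hx n
    · rintro x rfl
      exact mem_iInter.2 hWp
  choose f hf hf0 hf1 using fun n =>
    CompletelyRegularSpace.completely_regular p (W n)ᶜ (hWo n).isClosed_compl (by simp [hWp n])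
  obtain ⟨F, hF, hFiff⟩ := tsum_witness (fun n x => (f n x : ℝ))
    (fun n => continuous_subtype_val.comp (hf n)) (fun n x => (f n x).2.1)
    (fun n x => (f n x).2.2)
  refine ⟨F, hF, fun x => ?_⟩
  rw [hFiff]
  constructor
  · intro h
    have hx : x ∈ ⋂ n, W n := by
      refine mem_iInter.2 fun n => ?_
      by_contra hxW
      have h1 : f n x = 1 := hf1 n (by simpa using hxW)
      have := h n
      rw [h1] at this
      norm_num at this
    rw [hWi] at hx
    exact hx
  · rintro rfl n
    rw [hf0 n]
    simp

theorem boolean_nhds {Q : Type u} [Group Q] [TopologicalSpace Q] [IsTopologicalGroup Q]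
    [T2Space Q] [CompletelyRegularSpace Q] [LindelofSpace Q]
    (hbd : IsBasicallyDisconnected Q) (hGδ : IsGδ ({1} : Set Q)) :
    {x : Q | x * x = 1} ∈ 𝓝 (1 : Q) := by
  classical
  by_contra hB
  obtain ⟨F, hF, hFiff⟩ := exists_zero_fun_of_gdelta hGδ
  set D : Set Q := {x : Q | x * x ≠ 1} with hD
  have hDcoz : IsCozeroSet D := by
    refine ⟨fun x => F (x * x), hF.comp (continuous_id.mul continuous_id), ?_⟩
    ext x
    simp only [hD, mem_setOf_eq]
    exact (not_iff_not.2 (hFiff (x * x))).symm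
  have h1D : (1 : Q) ∈ closure D := by
    rw [mem_closure_iff]
    intro o ho h1o
    by_contra hemp
    push_neg at hemp
    apply hB
    apply Filter.mem_of_superset (ho.mem_nhds h1o)
    intro x hx
    by_contra hxB
    exact (hemp.subset ⟨hx, hxB⟩).elim
  -- D is Lindelöf
  have hDLin : IsLindelof D := by
    have : D = ⋃ n : ℕ, {x : Q | 1 / (n + 1 : ℝ) ≤ |F (x * x)|} := by
      ext x
      simp only [hD, mem_setOf_eq, mem_iUnion]
      constructor
      · intro hx
        have hpos : 0 < |F (x * x)| := abs_pos.2 fun h => hx ((hFiff _).1 h)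
        obtain ⟨n, hn⟩ := exists_nat_one_div_lt hpos
        exact ⟨n, hn.le⟩
      · rintro ⟨n, hn⟩ h
        rw [(hFiff _).2 h, abs_zero] at hn
        have : (0:ℝ) < 1 / (n + 1) := by positivity
        linarith
    rw [this]
    apply isLindelof_iUnion
    intro n
    apply IsClosed.isLindelof
    exact isClosed_le continuous_const ((hF.comp (continuous_id.mul continuous_id)).abs)
  -- D nonempty
  have hDne : D.Nonempty := by
    rcases D.eq_empty_or_nonempty with h | h
    · rw [h, closure_empty] at h1D; exact h1D.elim
    · exact h
  haveI : Nonempty ↥D := hDne.to_subtype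
  have hVex : ∀ x : ↥D, ∃ C : Set Q, IsCozeroSet C ∧ (x : Q) ∈ C ∧ Disjoint C C⁻¹ := by
    rintro ⟨x, hx⟩
    have hxne : x ≠ x⁻¹ := fun h => hx (mul_eq_one_iff_eq_inv.2 h)
    obtain ⟨A, B', hA, hB', hxA, hxB', hAB⟩ := t2_separation hxne
    have hopen : IsOpen (A ∩ B'⁻¹) := hA.inter hB'.inv
    have hxmem : x ∈ A ∩ B'⁻¹ := ⟨hxA, by rwa [Set.mem_inv]⟩
    obtain ⟨C, hCcoz, hxC, hCsub⟩ := exists_cozero_nhd hopen hxmem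
    refine ⟨C, hCcoz, hxC, ?_⟩
    have h1 : C ⊆ A := fun y hy => (hCsub hy).1
    have h2 : C⁻¹ ⊆ B' := by
      intro y hy
      rw [Set.mem_inv] at hy
      have := (hCsub hy).2
      rwa [Set.mem_inv, inv_inv] at this
    exact hAB.mono h1 h2
  choose V hVcoz hVmem hVdisj using hVex
  have hcover : D ⊆ ⋃ x : ↥D, V x := fun d hd => mem_iUnion.2 ⟨⟨d, hd⟩, hVmem _⟩
  obtain ⟨r, hr⟩ := hDLin.indexed_countable_subcover V (fun x => (hVcoz x).isOpen) hcover
  set Vn : ℕ → Set Q := fun n => V (r n) with hVn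
  set O : ℕ → Set Q := fun n => closure (Vn n) with hO
  have hOclopen : ∀ n, IsClopen (O n) := fun n => ⟨isClosed_closure, hbd _ (hVcoz (r n))⟩
  set P : ℕ → Set Q := fun n => O n ∩ ⋂ m ∈ Finset.range n, (O m)ᶜ with hP
  have hPclopen : ∀ n, IsClopen (P n) := fun n =>
    (hOclopen n).inter (isClopen_biInter_finset fun m _ => (hOclopen m).compl)
  have hPsub : ∀ n, P n ⊆ O n := fun n => inter_subset_left
  have hPdisj : ∀ m n, m ≠ n → Disjoint (P m) (P n) := by
    have key : ∀ m n, m < n → Disjoint (P m) (P n) := by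
      intro m n hmn
      rw [Set.disjoint_left]
      intro x hxm hxn
      have hxOm : x ∈ O m := hPsub m hxm
      have : x ∈ (O m)ᶜ := by
        have := hxn.2
        simp only [mem_iInter] at this
        exact this m (Finset.mem_range.2 hmn)
      exact this hxOm
    intro m n hmn
    rcases lt_or_gt_of_ne hmn with h | h
    · exact key m n h
    · exact (key n m h).symm
  set W : ℕ → Set Q := fun n => D ∩ P n with hWdef
  have hWcoz : ∀ n, IsCozeroSet (W n) :=
    fun n => hDcoz.inter (isCozeroSet_of_isClopen (hPclopen n))
  have hinvcoz : ∀ s : Set Q, IsCozeroSet s → IsCozeroSet s⁻¹ := by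
    intro s hs
    have : s⁻¹ = (fun x : Q => x⁻¹) ⁻¹' s := by
      ext y; simp [Set.mem_inv]
    rw [this]
    exact hs.preimage continuous_inv
  have hWWinv : ∀ n, Disjoint (W n) (W n)⁻¹ := by
    intro n
    have hVninvcoz : IsCozeroSet (Vn n)⁻¹ := hinvcoz _ (hVcoz (r n))
    have hdisj : Disjoint (closure (Vn n)) (closure ((Vn n)⁻¹)) :=
      hbd.disjoint_closure (hVcoz (r n)) hVninvcoz (hVdisj (r n))
    apply hdisj.mono
    · exact (inter_subset_right).trans (hPsub n)
    · rw [← inv_closure]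
      apply Set.inv_subset_inv.2
      exact (inter_subset_right).trans (hPsub n)
  have hWpair : ∀ m n, m ≠ n → Disjoint (W m) (W n) :=
    fun m n h => (hPdisj m n h).mono inter_subset_right inter_subset_right
  have hDW : ∀ d ∈ D, ∃ n, d ∈ W n := by
    intro d hd
    have : ∃ k, d ∈ O k := by
      obtain ⟨k, hk⟩ := mem_iUnion.1 (hr hd)
      exact ⟨k, subset_closure hk⟩
    set n := Nat.find this with hn
    refine ⟨n, hd, Nat.find_spec this, ?_⟩
    simp only [mem_iInter]
    intro m hm
    exact Nat.find_min this (Finset.mem_range.1 hm)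
  set Wp : ℕ × ℕ → Set Q := fun p => if p.1 < p.2 then W p.1 ∩ (W p.2)⁻¹ else ∅ with hWp
  set S := ⋃ p : ℕ × ℕ, Wp p with hS
  have hmemS : ∀ x : Q, x ∈ S ↔ ∃ p : ℕ × ℕ, p.1 < p.2 ∧ x ∈ W p.1 ∧ x⁻¹ ∈ W p.2 := by
    intro x
    rw [hS, mem_iUnion]
    constructor
    · rintro ⟨p, hp⟩
      simp only [hWp] at hp
      by_cases h : p.1 < p.2
      · rw [if_pos h] at hp
        exact ⟨p, h, hp.1, Set.mem_inv.1 hp.2⟩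
      · rw [if_neg h] at hp
        exact hp.elim
    · rintro ⟨p, h, h1, h2⟩
      exact ⟨p, by simp only [hWp, if_pos h]; exact ⟨h1, Set.mem_inv.2 h2⟩⟩
  have hScoz : IsCozeroSet S := by
    have e : ℕ ≃ ℕ × ℕ := (Denumerable.eqv (ℕ × ℕ)).symm
    have : S = ⋃ n : ℕ, Wp (e n) := by
      rw [hS, e.surjective.iUnion_comp Wp]
    rw [this]
    apply isCozeroSet_iUnion
    intro n
    simp only [hWp]
    by_cases h : (e n).1 < (e n).2
    · rw [if_pos h]
      exact (hWcoz _).inter (hinvcoz _ (hWcoz _))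
    · rw [if_neg h]
      exact isCozeroSet_empty
  have hSinvcoz : IsCozeroSet S⁻¹ := hinvcoz _ hScoz
  have hSdisj : Disjoint S S⁻¹ := by
    rw [Set.disjoint_left]
    intro x hxS hxT
    obtain ⟨⟨n, m⟩, hnm, hx1, hx2⟩ := (hmemS x).1 hxS
    rw [Set.mem_inv] at hxT
    obtain ⟨⟨a, b⟩, hab, hy1, hy2⟩ := (hmemS x⁻¹).1 hxT
    rw [inv_inv] at hy2
    simp only at hnm hab hx1 hx2 hy1 hy2
    have hnb : n = b := by
      by_contra h
      exact Set.disjoint_left.1 (hWpair n b h) hx1 hy2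
    have hma : m = a := by
      by_contra h
      exact Set.disjoint_left.1 (hWpair m a h) hx2 hy1
    omega
  have hDsub : D ⊆ S ∪ S⁻¹ := by
    intro d hd
    have hdinv : d⁻¹ ∈ D := by
      intro h
      apply hd
      show d * d = 1
      rw [← inv_inv (d * d), mul_inv_rev, h, inv_one]
    obtain ⟨n, hn⟩ := hDW d hd
    obtain ⟨m, hm⟩ := hDW d⁻¹ hdinv
    have hnm : n ≠ m := by
      rintro rfl
      exact Set.disjoint_left.1 (hWWinv n) hn (Set.mem_inv.2 hm)
    rcases lt_or_gt_of_ne hnm with h | h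
    · exact Or.inl ((hmemS d).2 ⟨(n, m), h, hn, hm⟩)
    · refine Or.inr (Set.mem_inv.2 ((hmemS d⁻¹).2 ⟨(m, n), h, hm, by rwa [inv_inv]⟩))
  have h1ST : (1 : Q) ∈ closure S ∪ closure (S⁻¹) := by
    rw [← closure_union]
    exact closure_mono hDsub h1D
  have hclS : (1 : Q) ∈ closure S ∧ (1 : Q) ∈ closure (S⁻¹) := by
    have hiff : (1 : Q) ∈ closure (S⁻¹) ↔ (1 : Q) ∈ closure S := by
      rw [← inv_closure, Set.mem_inv, inv_one]
    rcases h1ST with h | h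
    · exact ⟨h, hiff.2 h⟩
    · exact ⟨hiff.1 h, h⟩
  exact Set.disjoint_left.1 (hbd.disjoint_closure hScoz hSinvcoz hSdisj) hclS.1 hclS.2

theorem exists_boolean_open_subgroup {Q : Type u} [Group Q] [TopologicalSpace Q]
    [IsTopologicalGroup Q] (hB : {x : Q | x * x = 1} ∈ 𝓝 (1 : Q)) :
    ∃ H : Subgroup Q, IsOpen (H : Set Q) ∧ ∀ h ∈ H, h * h = 1 := by
  obtain ⟨Vo, hVo, h1V, hVV⟩ := exists_open_nhds_one_mul_subset hB
  set U : Set Q := Vo ∩ {x : Q | x * x = 1} with hU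
  have hUnhds : U ∈ 𝓝 (1 : Q) :=
    Filter.inter_mem (hVo.mem_nhds h1V) hB
  have hUsq : ∀ x ∈ U, x * x = 1 := fun x hx => hx.2
  have hUcomm : ∀ x ∈ U, ∀ y ∈ U, x * y = y * x := by
    intro x hx y hy
    have hxy : (x * y) * (x * y) = 1 := hVV (Set.mul_mem_mul hx.1 hy.1)
    have hxinv : x⁻¹ = x := inv_eq_of_mul_eq_one_right hx.2
    have hyinv : y⁻¹ = y := inv_eq_of_mul_eq_one_right hy.2
    have hxyinv : (x * y)⁻¹ = x * y := inv_eq_of_mul_eq_one_right hxy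
    calc x * y = (x * y)⁻¹ := hxyinv.symm
      _ = y⁻¹ * x⁻¹ := mul_inv_rev _ _
      _ = y * x := by rw [hxinv, hyinv]
  refine ⟨Subgroup.closure U, ?_, ?_⟩
  · exact Subgroup.isOpen_of_mem_nhds _ (Filter.mem_of_superset hUnhds Subgroup.subset_closure)
  · have C1 : ∀ y ∈ Subgroup.closure U, ∀ x ∈ U, Commute x y := by
      intro y hy
      induction hy using Subgroup.closure_induction with
      | mem z hz => exact fun x hx => hUcomm x hx z hz
      | one => exact fun x _ => Commute.one_right x
      | mul a b _ _ iha ihb => exact fun x hx => (iha x hx).mul_right (ihb x hx)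
      | inv a _ iha => exact fun x hx => (iha x hx).inv_right
    have C2 : ∀ z ∈ Subgroup.closure U, ∀ y ∈ Subgroup.closure U, Commute y z := by
      intro z hz
      induction hz using Subgroup.closure_induction with
      | mem w hw => exact fun y hy => (C1 y hy w hw).symm
      | one => exact fun y _ => Commute.one_right y
      | mul a b ha hb iha ihb => exact fun y hy => (iha y hy).mul_right (ihb y hy)
      | inv a ha iha => exact fun y hy => (iha y hy).inv_right
    intro h hh
    induction hh using Subgroup.closure_induction with
    | mem z hz => exact hUsq z hz
    | one => exact one_mul 1
    | mul a b ha hb iha ihb =>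
      have hab : Commute a b := C2 b hb a ha
      calc (a * b) * (a * b) = a * (b * a) * b := by group
        _ = a * (a * b) * b := by rw [hab.eq]
        _ = (a * a) * (b * b) := by group
        _ = 1 := by rw [iha, ihb, one_mul]
    | inv a ha iha =>
      rw [← mul_inv_rev, iha, inv_one]

lemma IsBasicallyDisconnected.clopen_subtype {X : Type u} [TopologicalSpace X]
    (hbd : IsBasicallyDisconnected X) {A : Set X} (hA : IsClopen A) :
    IsBasicallyDisconnected ↥A := by
  rintro s ⟨f, hf, rfl⟩
  classical
  set F : X → ℝ := fun x => if h : x ∈ A then f ⟨x, h⟩ else 0 with hFdef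
  have hFcont : Continuous F := by
    rw [continuous_iff_continuousAt]
    intro x
    by_cases hx : x ∈ A
    · have hons : ContinuousOn F A := by
        rw [continuousOn_iff_continuous_restrict]
        convert hf using 1
        ext y
        simp [hFdef, Set.restrict_apply, y.2]
      exact hons.continuousAt (hA.2.mem_nhds hx)
    · have hons : ContinuousOn F Aᶜ := by
        apply ContinuousOn.congr (continuousOn_const (c := (0:ℝ)))
        intro y hy
        simp only [hFdef]
        rw [dif_neg hy]
      exact hons.continuousAt (hA.1.isOpen_compl.mem_nhds hx)
  have himg : Subtype.val '' {y : ↥A | f y ≠ 0} = {x : X | F x ≠ 0} := by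
    ext x
    constructor
    · rintro ⟨y, hy, rfl⟩
      simp only [mem_setOf_eq, hFdef]
      rw [dif_pos y.2]
      simpa using hy
    · intro hx
      by_cases hxA : x ∈ A
      · refine ⟨⟨x, hxA⟩, ?_, rfl⟩
        simp only [mem_setOf_eq, hFdef] at hx ⊢
        rwa [dif_pos hxA] at hx
      · simp only [mem_setOf_eq, hFdef] at hx
        rw [dif_neg hxA] at hx
        exact (hx rfl).elim
  have hopen : IsOpen (closure {x : X | F x ≠ 0}) := hbd _ ⟨F, hFcont, rfl⟩
  rw [IsInducing.subtypeVal.closure_eq_preimage_closure_image, himg]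
  exact hopen.preimage continuous_subtype_val

lemma quotient_basicallyDisconnected {G : Type u} [Group G] [TopologicalSpace G]
    [IsTopologicalGroup G] (N : Subgroup G) [N.Normal] (hbd : IsBasicallyDisconnected G) :
    IsBasicallyDisconnected (G ⧸ N) := by
  rintro C ⟨φ, hφ, rfl⟩
  set π : G → G ⧸ N := QuotientGroup.mk with hπ
  have hπcont : Continuous π := continuous_quotient_mk'
  have hπopen : IsOpenMap π := QuotientGroup.isOpenMap_coe
  set D : Set G := {x | φ (π x) ≠ 0} with hDdef
  have hDcoz : IsCozeroSet D := ⟨φ ∘ π, hφ.comp hπcont, rfl⟩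
  have hclopen : IsOpen (closure D) := hbd D hDcoz
  have hDmulmem : ∀ n ∈ N, ∀ y, y ∈ D → y * n ∈ D := by
    intro n hn y hy
    have : π (y * n) = π y := QuotientGroup.mk_mul_of_mem y hn
    simpa only [hDdef, mem_setOf_eq, this] using hy
  have hDtrans : ∀ n ∈ N, (fun y => y * n) '' D = D := by
    intro n hn
    apply Subset.antisymm
    · rintro _ ⟨z, hz, rfl⟩
      exact hDmulmem n hn z hz
    · intro y hy
      refine ⟨y * n⁻¹, hDmulmem n⁻¹ (inv_mem hn) y hy, by group⟩
  have hclsat : π ⁻¹' (π '' closure D) = closure D := by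
    apply Subset.antisymm
    · intro x hx
      obtain ⟨d, hd, hdx⟩ := hx
      have hn : d⁻¹ * x ∈ N := (QuotientGroup.eq).1 hdx
      have hxe : x = d * (d⁻¹ * x) := by group
      rw [hxe]
      have h2 : (fun y => y * (d⁻¹ * x)) '' closure D
          = closure ((fun y => y * (d⁻¹ * x)) '' D) :=
        (Homeomorph.mulRight (d⁻¹ * x)).image_closure D
      have h3 : (fun y => y * (d⁻¹ * x)) '' D = D := hDtrans _ hn
      have : d * (d⁻¹ * x) ∈ (fun y => y * (d⁻¹ * x)) '' closure D := ⟨d, hd, rfl⟩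
      rwa [h2, h3] at this
    · exact subset_preimage_image π (closure D)
  have hQopen : IsOpen (π '' closure D) := hπopen _ hclopen
  have hQclosed : IsClosed (π '' closure D) := by
    rw [← (QuotientGroup.isQuotientMap_mk N).isClosed_preimage]
    rw [show (QuotientGroup.mk : G → G ⧸ N) ⁻¹' (π '' closure D) = closure D from hclsat]
    exact isClosed_closure
  have claim : closure {y : G ⧸ N | φ y ≠ 0} = π '' closure D := by
    apply Subset.antisymm
    · apply closure_minimal _ hQclosed
      intro y hy
      obtain ⟨x, rfl⟩ := QuotientGroup.mk_surjective y
      exact ⟨x, subset_closure hy, rfl⟩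
    · refine (image_closure_subset_closure_image hπcont).trans (closure_mono ?_)
      rintro _ ⟨x, hx, rfl⟩
      exact hx
  rw [claim]
  exact hQopen

theorem key_construction {G : Type u} [Group G] [TopologicalSpace G]
    [IsTopologicalGroup G] [LindelofSpace G] {M : ℕ → Set G} (hMo : ∀ n, IsOpen (M n))
    (hM1 : ∀ n, (1:G) ∈ M n) :
    ∃ (N : Subgroup G) (V : ℕ → Set G), N.Normal ∧ IsClosed (N : Set G) ∧
      (∀ n, (N : Set G) ⊆ M n) ∧ (∀ n, IsOpen (V n)) ∧
      (∀ n, ∃ m, V m * V m ⊆ V n) ∧ (∀ n, (N : Set G) ⊆ V n) ∧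
      (⋂ n, V n) = (N : Set G) := by
  classical
  let P := {W : Set G // IsOpen W ∧ (1:G) ∈ W ∧ W⁻¹ = W}
  have symm_mk : ∀ (V : Set G), IsOpen V → (1:G) ∈ V →
      IsOpen (V ∩ V⁻¹) ∧ (1:G) ∈ V ∩ V⁻¹ ∧ (V ∩ V⁻¹)⁻¹ = V ∩ V⁻¹ := by
    intro V hVo hV1
    refine ⟨hVo.inter hVo.inv, ⟨hV1, by rw [Set.mem_inv]; simpa using hV1⟩, ?_⟩
    rw [Set.inter_inv, inv_inv, inter_comm]
  have sqrt_ex : ∀ p : P, ∃ q : P, q.1 * q.1 ⊆ p.1 := by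
    rintro ⟨W, hWo, hW1, hWs⟩
    obtain ⟨V, hVo, hV1, hVV⟩ := exists_open_nhds_one_mul_subset (hWo.mem_nhds hW1)
    obtain ⟨h1, h2, h3⟩ := symm_mk V hVo hV1
    exact ⟨⟨V ∩ V⁻¹, h1, h2, h3⟩,
      (Set.mul_subset_mul inter_subset_left inter_subset_left).trans hVV⟩
  have conj_ex : ∀ p : P, ∃ c : ℕ → P,
      ∀ g : G, ∃ n, (fun x => g * x * g⁻¹) '' (c n).1 ⊆ p.1 := by
    rintro ⟨W, hWo, hW1, hWs⟩
    have hcont : Continuous (fun q : G × G => q.1 * q.2 * q.1⁻¹) :=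
      (continuous_fst.mul continuous_snd).mul continuous_fst.inv
    have hxg : ∀ g : G, ∃ (A : Set G) (V : Set G), IsOpen A ∧ IsOpen V ∧ g ∈ A ∧
        (1:G) ∈ V ∧ ∀ h ∈ A, ∀ x ∈ V, h * x * h⁻¹ ∈ W := by
      intro g
      have hpre : IsOpen ((fun q : G × G => q.1 * q.2 * q.1⁻¹) ⁻¹' W) := hWo.preimage hcont
      have hmem : (g, (1:G)) ∈ (fun q : G × G => q.1 * q.2 * q.1⁻¹) ⁻¹' W := by
        simp [hW1]
      obtain ⟨A, V, hAo, hVo, hgA, h1V, hsub⟩ := isOpen_prod_iff.1 hpre g 1 hmem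
      exact ⟨A, V, hAo, hVo, hgA, h1V, fun h hh x hx => hsub (mk_mem_prod hh hx)⟩
    choose A V hAo hVo hgA h1V hconj using hxg
    have hcover : (univ : Set G) ⊆ ⋃ g, A g := fun g _ => mem_iUnion.2 ⟨g, hgA g⟩
    obtain ⟨r, hr⟩ := isLindelof_univ.indexed_countable_subcover A hAo hcover
    refine ⟨fun n => ⟨V (r n) ∩ (V (r n))⁻¹, (symm_mk _ (hVo _) (h1V _)).1,
      (symm_mk _ (hVo _) (h1V _)).2.1, (symm_mk _ (hVo _) (h1V _)).2.2⟩, ?_⟩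
    intro g
    obtain ⟨n, hn⟩ : ∃ n, g ∈ A (r n) := by
      have := hr (mem_univ g)
      rwa [mem_iUnion] at this
    refine ⟨n, ?_⟩
    rintro _ ⟨x, hx, rfl⟩
    exact hconj (r n) g hn x hx.1
  choose sqrt hsqrt using sqrt_ex
  choose cnj hcnj using conj_ex
  let child : P → ℕ → P := fun p n => Nat.casesOn n (sqrt p) (fun m => cnj p m)
  let seed : ℕ → P := fun n => ⟨M n ∩ (M n)⁻¹, (symm_mk _ (hMo n) (hM1 n)).1,
    (symm_mk _ (hMo n) (hM1 n)).2.1, (symm_mk _ (hMo n) (hM1 n)).2.2⟩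
  let node : ℕ × List ℕ → P := fun t => t.2.foldl child (seed t.1)
  have hnode_app : ∀ (n : ℕ) (l : List ℕ) (i : ℕ),
      node (n, l ++ [i]) = child (node (n, l)) i := by
    intro n l i
    show (l ++ [i]).foldl child (seed n) = child (l.foldl child (seed n)) i
    rw [List.foldl_append]
    rfl
  set K : Set G := ⋂ t : ℕ × List ℕ, (node t).1 with hK
  have hKsub : ∀ t, K ⊆ (node t).1 := fun t => iInter_subset _ t
  have hK1 : (1:G) ∈ K := mem_iInter.2 fun t => (node t).2.2.1
  have hKmul : ∀ a b, a ∈ K → b ∈ K → a * b ∈ K := by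
    intro a b ha hb
    refine mem_iInter.2 fun t => ?_
    have h := hsqrt (node t)
    have ha' : a ∈ (sqrt (node t)).1 := by
      have := hKsub (t.1, t.2 ++ [0]) ha
      rwa [hnode_app] at this
    have hb' : b ∈ (sqrt (node t)).1 := by
      have := hKsub (t.1, t.2 ++ [0]) hb
      rwa [hnode_app] at this
    exact h (Set.mul_mem_mul ha' hb')
  have hKinv : ∀ a, a ∈ K → a⁻¹ ∈ K := by
    intro a ha
    refine mem_iInter.2 fun t => ?_
    have hsymm := (node t).2.2.2
    rw [← hsymm]
    exact Set.inv_mem_inv.2 (hKsub t ha)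
  have hKconj : ∀ a ∈ K, ∀ g : G, g * a * g⁻¹ ∈ K := by
    intro a ha g
    refine mem_iInter.2 fun t => ?_
    obtain ⟨m, hm⟩ := hcnj (node t) g
    have ha' : a ∈ (cnj (node t) m).1 := by
      have := hKsub (t.1, t.2 ++ [m + 1]) ha
      rwa [hnode_app] at this
    exact hm ⟨a, ha', rfl⟩
  have hclosurestep : ∀ p : P, closure (sqrt p).1 ⊆ p.1 := by
    intro p x hx
    set V := (sqrt p).1 with hV
    have hVo : IsOpen V := (sqrt p).2.1
    have h1V : (1:G) ∈ V := (sqrt p).2.2.1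
    have hVs : V⁻¹ = V := (sqrt p).2.2.2
    have ho : IsOpen ((fun y => x⁻¹ * y) ⁻¹' V) :=
      hVo.preimage (continuous_const.mul continuous_id)
    have hxo : x ∈ (fun y => x⁻¹ * y) ⁻¹' V := by
      simp [h1V]
    obtain ⟨z, hz1, hz2⟩ := mem_closure_iff.1 hx _ ho hxo
    have hzV : x⁻¹ * z ∈ V := hz1
    have : x = z * (x⁻¹ * z)⁻¹ := by group
    rw [this]
    apply hsqrt p
    apply Set.mul_mem_mul hz2
    show (x⁻¹ * z)⁻¹ ∈ (sqrt p).1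
    rw [← (sqrt p).2.2.2]
    exact Set.inv_mem_inv.2 hzV
  have hKclosed : IsClosed K := by
    have : K = ⋂ t : ℕ × List ℕ, closure ((node (t.1, t.2 ++ [0])).1) := by
      apply Subset.antisymm
      · intro x hx
        exact mem_iInter.2 fun t => subset_closure (hKsub _ hx)
      · intro x hx
        refine mem_iInter.2 fun t => ?_
        have := mem_iInter.1 hx t
        rw [hnode_app] at this
        exact hclosurestep (node t) this
    rw [this]
    exact isClosed_iInter fun t => isClosed_closure
  let N : Subgroup G :=
    { carrier := K
      mul_mem' := fun ha hb => hKmul _ _ ha hb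
      one_mem' := hK1
      inv_mem' := fun ha => hKinv _ ha }
  let e : ℕ ≃ ℕ × List ℕ := (Denumerable.eqv (ℕ × List ℕ)).symm
  refine ⟨N, fun k => (node (e k)).1, ⟨fun a ha g => hKconj a ha g⟩, hKclosed, ?_, ?_, ?_, ?_, ?_⟩
  · intro n
    intro x hx
    have := hKsub (n, []) hx
    exact inter_subset_left this
  · exact fun k => (node (e k)).2.1
  · intro k
    refine ⟨e.symm ((e k).1, (e k).2 ++ [0]), ?_⟩
    have h1 : e (e.symm ((e k).1, (e k).2 ++ [0])) = ((e k).1, (e k).2 ++ [0]) :=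
      Equiv.apply_symm_apply _ _
    beta_reduce
    rw [h1, hnode_app]
    exact hsqrt (node ((e k).1, (e k).2))
  · exact fun k x hx => hKsub (e k) hx
  · exact e.surjective.iInter_comp fun t => (node t).1

lemma gdelta_seq {X : Type u} [TopologicalSpace X] {s : Set X} (hs : IsGδ s) :
    ∃ M : ℕ → Set X, (∀ n, IsOpen (M n)) ∧ s = ⋂ n, M n := by
  obtain ⟨T, hTo, hTc, hTe⟩ := hs
  have hTc' : (insert univ T : Set (Set X)).Countable := hTc.insert _
  obtain ⟨W, hW⟩ := hTc'.exists_eq_range ⟨univ, mem_insert _ _⟩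
  have hmem : ∀ n, W n ∈ insert univ T := fun n => hW ▸ mem_range_self n
  refine ⟨W, fun n => ?_, ?_⟩
  · rcases hmem n with h | h
    · rw [h]; exact isOpen_univ
    · exact hTo _ h
  · rw [hTe]
    apply Subset.antisymm
    · intro x hx
      refine mem_iInter.2 fun n => ?_
      rcases hmem n with h | h
      · rw [h]; trivial
      · exact hx _ h
    · intro x hx t ht
      have : t ∈ range W := by rw [← hW]; exact mem_insert_of_mem _ ht
      obtain ⟨n, rfl⟩ := this
      exact mem_iInter.1 hx n

theorem statement3 {G : Type u} [Group G] [TopologicalSpace G] [IsTopologicalGroup G]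
    [T2Space G] [CompletelyRegularSpace G] [LindelofSpace G]
    (hbd : IsBasicallyDisconnected G) :
    IsPSpace G ∨
      ∃ (N : Subgroup G) (hN : N.Normal), IsClosed (N : Set G) ∧
        @QuotientIsGood G _ _ N hN := by
  by_cases hP : IsPSpace G
  · exact Or.inl hP
  right
  rw [IsPSpace] at hP
  push_neg at hP
  obtain ⟨s, hsGδ, hsno⟩ := hP
  obtain ⟨x, hxs, hxn⟩ : ∃ x ∈ s, s ∉ 𝓝 x := by
    by_contra h
    push_neg at h
    exact hsno (isOpen_iff_mem_nhds.2 h)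
  obtain ⟨M, hMo, hMe⟩ := gdelta_seq hsGδ
  set τ : G ≃ₜ G := Homeomorph.mulLeft x with hτ
  set M' : ℕ → Set G := fun n => τ ⁻¹' (M n) with hM'
  have hM'o : ∀ n, IsOpen (M' n) := fun n => (hMo n).preimage τ.continuous
  have h1M' : ∀ n, (1:G) ∈ M' n := by
    intro n
    show τ 1 ∈ M n
    have : τ 1 = x := mul_one x
    rw [this]
    have := hMe ▸ hxs
    exact mem_iInter.1 this n
  obtain ⟨N, V, hNnormal, hNclosed, hNsubM, hVo, hVsq, hNV, hVN⟩ := key_construction hM'o h1M'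
  haveI := hNnormal
  haveI : IsClosed (N : Set G) := hNclosed
  haveI : LindelofSpace (G ⧸ N) := by
    constructor
    have himg : IsLindelof (QuotientGroup.mk '' (univ : Set G) : Set (G ⧸ N)) :=
      isLindelof_univ.image continuous_quotient_mk'
    rwa [image_univ, Set.range_eq_univ.2 (QuotientGroup.mk_surjective)] at himg
  -- {1} is Gδ in the quotient
  have hGδQ : IsGδ ({1} : Set (G ⧸ N)) := by
    have heq : ({1} : Set (G ⧸ N)) = ⋂ n, (QuotientGroup.mk '' V n : Set (G ⧸ N)) := by
      apply Subset.antisymm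
      · rintro q rfl
        refine mem_iInter.2 fun n => ⟨1, hNV n N.one_mem, rfl⟩
      · intro q hq
        obtain ⟨g, rfl⟩ := QuotientGroup.mk_surjective q
        have hgN : g ∈ N := by
          show g ∈ (N : Set G)
          rw [← hVN]
          refine mem_iInter.2 fun n => ?_
          obtain ⟨m, hm⟩ := hVsq n
          obtain ⟨v, hv, hvq⟩ := mem_iInter.1 hq m
          have hvN : v⁻¹ * g ∈ N := (QuotientGroup.eq).1 hvq
          have : g = v * (v⁻¹ * g) := by group
          rw [this]
          exact hm (Set.mul_mem_mul hv (hNV m hvN))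
        show QuotientGroup.mk g ∈ ({1} : Set (G ⧸ N))
        simp [QuotientGroup.eq_one_iff, hgN]
      
    rw [heq]
    exact IsGδ.iInter fun n => (QuotientGroup.isOpenMap_coe (V n) (hVo n)).isGδ
  -- nondiscrete
  have hnd : ¬ DiscreteTopology (G ⧸ N) := by
    intro hdisc
    have hopen1 : IsOpen ({1} : Set (G ⧸ N)) := isOpen_discrete _
    have hNopen : IsOpen (N : Set G) := by
      have heq : (QuotientGroup.mk ⁻¹' ({1} : Set (G ⧸ N)) : Set G) = N := by
        ext g
        simp [QuotientGroup.eq_one_iff]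
      rw [← heq]
      exact hopen1.preimage continuous_quotient_mk'
    apply hxn
    have hSnhds : τ ⁻¹' s ∈ 𝓝 (1 : G) := by
      apply Filter.mem_of_superset (hNopen.mem_nhds N.one_mem)
      intro g hg
      show τ g ∈ s
      rw [hMe]
      refine mem_iInter.2 fun n => hNsubM n hg
    have h2 : τ '' (τ ⁻¹' s) ∈ Filter.map τ (𝓝 1) := Filter.image_mem_map hSnhds
    rw [τ.map_nhds_eq] at h2
    rw [image_preimage_eq s τ.surjective] at h2
    have hτ1 : τ (1:G) = x := mul_one x
    rwa [hτ1] at h2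
  -- basically disconnected quotient
  have hbdQ : IsBasicallyDisconnected (G ⧸ N) := quotient_basicallyDisconnected N hbd
  -- boolean subgroup
  obtain ⟨H, hHopen, hHbool⟩ := exists_boolean_open_subgroup (boolean_nhds hbdQ hGδQ)
  have hHbd : IsBasicallyDisconnected ↥H :=
    hbdQ.clopen_subtype ⟨H.isClosed_of_isOpen hHopen, hHopen⟩
  exact ⟨N, hNnormal, hNclosed, hnd, hGδQ, hbdQ, H, hHopen, hHbool, hHbd⟩
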